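/- Let G and H be isoclinic finite groups. Then d(G) = d(H); that is, k(G)/|G| = k(H)/|H|, where k denotes the number of conjugacy classes. -/

import Mathlib

open scoped commutatorElement

/-- Two groups `G` and `H` are isoclinic if there are isomorphisms
`φ : G/Z(G) ≃* H/Z(H)` and `ψ : G' ≃* H'` such that whenever `φ(g₁Z(G)) = h₁Z(H)` and
`φ(g₂Z(G)) = h₂Z(H)`, one has `ψ(⁅g₁,g₂⁆) = ⁅h₁,h₂⁆`. -/
def Isoclinic (G : Type*) [Group G] (H : Type*) [Group H] : Prop :=
  ∃ (φ : G ⧸ Subgroup.center G ≃* H ⧸ Subgroup.center H)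
    (ψ : ↥(commutator G) ≃* ↥(commutator H)),
    ∀ (g₁ g₂ : G) (h₁ h₂ : H),
      φ (g₁ : G ⧸ Subgroup.center G) = (h₁ : H ⧸ Subgroup.center H) →
      φ (g₂ : G ⧸ Subgroup.center G) = (h₂ : H ⧸ Subgroup.center H) →
      ∀ hmem : ⁅g₁, g₂⁆ ∈ commutator G,
        (ψ ⟨⁅g₁, g₂⁆, hmem⟩ : H) = ⁅h₁, h₂⁆

section Aux

variable {G : Type*} [Group G]

lemma commute_mul_center_right_iff (g x : G) (z : Subgroup.center G) :
    Commute (g * z) x ↔ Commute g x := by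
  have hz : (z : G) * x = x * z := ((Subgroup.mem_center_iff.mp z.2) x).symm
  constructor
  · intro h
    have h' : g * x * (z : G) = x * g * (z : G) := by
      calc g * x * (z : G) = g * (z : G) * x := by rw [mul_assoc, ← hz, ← mul_assoc]
        _ = x * (g * (z : G)) := h.eq
        _ = x * g * (z : G) := (mul_assoc _ _ _).symm
    exact mul_right_cancel h'
  · intro h
    show (g * z) * x = x * (g * z)
    rw [mul_assoc, hz, ← mul_assoc, h.eq, mul_assoc]

lemma commute_mul_center_iff (g x : G) (z w : Subgroup.center G) :
    Commute (g * z) (x * w) ↔ Commute g x := by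
  rw [commute_mul_center_right_iff]
  constructor
  · intro h
    exact ((commute_mul_center_right_iff x g w).mp h.symm).symm
  · intro h
    exact ((commute_mul_center_right_iff x g w).mpr h.symm).symm

lemma commute_iff_of_mk_eq {g₁ g₂ g₁' g₂' : G}
    (h1 : (g₁ : G ⧸ Subgroup.center G) = (g₁' : G ⧸ Subgroup.center G))
    (h2 : (g₂ : G ⧸ Subgroup.center G) = (g₂' : G ⧸ Subgroup.center G)) :
    Commute g₁ g₂ ↔ Commute g₁' g₂' := by
  obtain ⟨z, hz⟩ : ∃ z : Subgroup.center G, g₁' = g₁ * z :=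
    ⟨⟨g₁⁻¹ * g₁', QuotientGroup.eq.mp h1⟩, (mul_inv_cancel_left g₁ g₁').symm⟩
  obtain ⟨w, hw⟩ : ∃ w : Subgroup.center G, g₂' = g₂ * w :=
    ⟨⟨g₂⁻¹ * g₂', QuotientGroup.eq.mp h2⟩, (mul_inv_cancel_left g₂ g₂').symm⟩
  rw [hz, hw, commute_mul_center_iff]

/-- The key counting equivalence: commuting pairs in `G` correspond to pairs in
`(G⧸Z) × (G⧸Z)` whose representatives commute, together with a pair of central elements. -/
noncomputable def commutingPairsEquiv (G : Type*) [Group G] :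
    {p : G × G // Commute p.1 p.2} ≃
      {q : (G ⧸ Subgroup.center G) × (G ⧸ Subgroup.center G) // Commute q.1.out q.2.out} ×
        (Subgroup.center G × Subgroup.center G) where
  toFun p :=
    ⟨⟨((p.1.1 : G ⧸ Subgroup.center G), (p.1.2 : G ⧸ Subgroup.center G)),
      (commute_iff_of_mk_eq
        (QuotientGroup.out_eq' (p.1.1 : G ⧸ Subgroup.center G)).symm
        (QuotientGroup.out_eq' (p.1.2 : G ⧸ Subgroup.center G)).symm).mp p.2⟩,
     ⟨((p.1.1 : G ⧸ Subgroup.center G)).out⁻¹ * p.1.1,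
        QuotientGroup.eq.mp (QuotientGroup.out_eq' _)⟩,
     ⟨((p.1.2 : G ⧸ Subgroup.center G)).out⁻¹ * p.1.2,
        QuotientGroup.eq.mp (QuotientGroup.out_eq' _)⟩⟩
  invFun q :=
    ⟨(q.1.1.1.out * q.2.1, q.1.1.2.out * q.2.2),
      (commute_mul_center_iff _ _ _ _).mpr q.1.2⟩
  left_inv p := by
    apply Subtype.ext
    simp [mul_inv_cancel_left]
  right_inv q := by
    obtain ⟨⟨⟨a, b⟩, hab⟩, z, w⟩ := q
    have hz : ((a.out * (z : G) : G) : G ⧸ Subgroup.center G) = a := by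
      rw [QuotientGroup.mk_mul, (QuotientGroup.eq_one_iff (z : G)).mpr z.2, mul_one,
        QuotientGroup.out_eq']
    have hw : ((b.out * (w : G) : G) : G ⧸ Subgroup.center G) = b := by
      rw [QuotientGroup.mk_mul, (QuotientGroup.eq_one_iff (w : G)).mpr w.2, mul_one,
        QuotientGroup.out_eq']
    refine Prod.ext (Subtype.ext (Prod.ext hz hw)) (Prod.ext ?_ ?_)
    · apply Subtype.ext
      show ((a.out * (z : G) : G) : G ⧸ Subgroup.center G).out⁻¹ * (a.out * z) = z
      rw [hz, inv_mul_cancel_left]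
    · apply Subtype.ext
      show ((b.out * (w : G) : G) : G ⧸ Subgroup.center G).out⁻¹ * (b.out * w) = w
      rw [hw, inv_mul_cancel_left]

end Aux

/-- Isoclinic finite groups have the same commuting probability:
`d(G) = k(G)/|G| = k(H)/|H| = d(H)`. -/
theorem commProb_eq_of_isoclinic (G : Type*) [Group G] [Fintype G]
    (H : Type*) [Group H] [Fintype H] (hiso : Isoclinic G H) :
    (Nat.card (ConjClasses G) : ℚ) / Nat.card G =
      (Nat.card (ConjClasses H) : ℚ) / Nat.card H := by
  obtain ⟨φ, ψ, hc⟩ := hiso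
  -- the transfer of the commuting relation along φ
  have key : ∀ (g₁ g₂ : G) (h₁ h₂ : H),
      φ (g₁ : G ⧸ Subgroup.center G) = (h₁ : H ⧸ Subgroup.center H) →
      φ (g₂ : G ⧸ Subgroup.center G) = (h₂ : H ⧸ Subgroup.center H) →
      (Commute g₁ g₂ ↔ Commute h₁ h₂) := by
    intro g₁ g₂ h₁ h₂ e1 e2
    have hmem : ⁅g₁, g₂⁆ ∈ commutator G := by
      rw [commutator_def]
      exact Subgroup.commutator_mem_commutator (Subgroup.mem_top _) (Subgroup.mem_top _)
    have hψ := hc g₁ g₂ h₁ h₂ e1 e2 hmem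
    rw [← commutatorElement_eq_one_iff_commute, ← commutatorElement_eq_one_iff_commute]
    constructor
    · intro h
      have h1 : (⟨⁅g₁, g₂⁆, hmem⟩ : commutator G) = 1 := Subtype.ext h
      rw [← hψ, h1, map_one, OneMemClass.coe_one]
    · intro h
      have h1 : ψ ⟨⁅g₁, g₂⁆, hmem⟩ = 1 := Subtype.ext (by rw [hψ, h, OneMemClass.coe_one])
      have h2 : (⟨⁅g₁, g₂⁆, hmem⟩ : commutator G) = 1 := by
        have := ψ.injective (h1.trans (map_one ψ).symm)
        exact this
      exact congrArg Subtype.val h2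
  -- bijection between the quotient-level commuting sets
  have eT : {q : (G ⧸ Subgroup.center G) × (G ⧸ Subgroup.center G) //
        Commute q.1.out q.2.out} ≃
      {q : (H ⧸ Subgroup.center H) × (H ⧸ Subgroup.center H) //
        Commute q.1.out q.2.out} := by
    refine (Equiv.prodCongr φ.toEquiv φ.toEquiv).subtypeEquiv ?_
    rintro ⟨a, b⟩
    exact key a.out b.out (φ a).out (φ b).out
      (by rw [QuotientGroup.out_eq', QuotientGroup.out_eq'])
      (by rw [QuotientGroup.out_eq', QuotientGroup.out_eq'])
  -- counting
  rw [← commProb_def', ← commProb_def', commProb_def, commProb_def]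
  have cardG : Nat.card G = Nat.card (G ⧸ Subgroup.center G) * Nat.card (Subgroup.center G) :=
    Subgroup.card_eq_card_quotient_mul_card_subgroup _
  have cardH : Nat.card H = Nat.card (H ⧸ Subgroup.center H) * Nat.card (Subgroup.center H) :=
    Subgroup.card_eq_card_quotient_mul_card_subgroup _
  have cG : Nat.card {p : G × G // Commute p.1 p.2} =
      Nat.card {q : (G ⧸ Subgroup.center G) × (G ⧸ Subgroup.center G) //
        Commute q.1.out q.2.out} * (Nat.card (Subgroup.center G) * Nat.card (Subgroup.center G)) := by
    rw [Nat.card_congr (commutingPairsEquiv G), Nat.card_prod, Nat.card_prod]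
  have cH : Nat.card {p : H × H // Commute p.1 p.2} =
      Nat.card {q : (H ⧸ Subgroup.center H) × (H ⧸ Subgroup.center H) //
        Commute q.1.out q.2.out} * (Nat.card (Subgroup.center H) * Nat.card (Subgroup.center H)) := by
    rw [Nat.card_congr (commutingPairsEquiv H), Nat.card_prod, Nat.card_prod]
  have hTeq : Nat.card {q : (G ⧸ Subgroup.center G) × (G ⧸ Subgroup.center G) //
        Commute q.1.out q.2.out} =
      Nat.card {q : (H ⧸ Subgroup.center H) × (H ⧸ Subgroup.center H) //
        Commute q.1.out q.2.out} := Nat.card_congr eT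
  have hQeq : Nat.card (G ⧸ Subgroup.center G) = Nat.card (H ⧸ Subgroup.center H) :=
    Nat.card_congr φ.toEquiv
  have hzG : (0 : ℚ) < Nat.card (Subgroup.center G) := by
    exact_mod_cast Nat.card_pos
  have hzH : (0 : ℚ) < Nat.card (Subgroup.center H) := by
    exact_mod_cast Nat.card_pos
  have hqG : (0 : ℚ) < Nat.card (G ⧸ Subgroup.center G) := by
    exact_mod_cast Nat.card_pos
  have hqH : (0 : ℚ) < Nat.card (H ⧸ Subgroup.center H) := by
    exact_mod_cast Nat.card_pos
  rw [cG, cH, cardG, cardH, hTeq, hQeq]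
  push_cast
  field_simp
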